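/- Let F : ℕ × ℕ → ℝ satisfy: (i) antisymmetry: F(n,k) = −F(k,n) for all n, k with n + k ≥ 1; (ii) the triple-pancake identity: F(a+b+2, c) + F(b+c+2, a) + F(c+a+2, b) = F(a+b, c) + F(b+c, a) + F(c+a, b) for all natural numbers a, b, c with a + b + c ≥ 1; and (iii) the base values F(1,0) = 4/15, F(2,0) = 1/6, F(3,0) = 4/35. Then F(n,k) = 4(n−k)/((n+k)(n+k+2)(n+k+4)) for all natural numbers n, k with n + k ≥ 1. -/

import Mathlib

noncomputable def Tw (p : ℕ × ℕ) : ℝ :=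
  4 * ((p.1 : ℝ) - (p.2 : ℝ)) /
    (((p.1 : ℝ) + (p.2 : ℝ)) * ((p.1 : ℝ) + (p.2 : ℝ) + 2) * ((p.1 : ℝ) + (p.2 : ℝ) + 4))

lemma Tw_anti (n k : ℕ) : Tw (n, k) = - Tw (k, n) := by
  simp only [Tw]; ring

lemma Tw_triple (a b c : ℕ) (h : 1 ≤ a + b + c) :
    Tw (a + b + 2, c) + Tw (b + c + 2, a) + Tw (c + a + 2, b) =
      Tw (a + b, c) + Tw (b + c, a) + Tw (c + a, b) := by
  have h' : (1:ℝ) ≤ (a:ℝ) + (b:ℝ) + (c:ℝ) := by exact_mod_cast h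
  simp only [Tw]
  have e1 : ((a + b + 2 : ℕ) : ℝ) + ((c : ℕ) : ℝ) = (a:ℝ) + (b:ℝ) + (c:ℝ) + 2 := by
    push_cast; ring
  have e2 : ((b + c + 2 : ℕ) : ℝ) + ((a : ℕ) : ℝ) = (a:ℝ) + (b:ℝ) + (c:ℝ) + 2 := by
    push_cast; ring
  have e3 : ((c + a + 2 : ℕ) : ℝ) + ((b : ℕ) : ℝ) = (a:ℝ) + (b:ℝ) + (c:ℝ) + 2 := by
    push_cast; ring
  have f1 : ((a + b : ℕ) : ℝ) + ((c : ℕ) : ℝ) = (a:ℝ) + (b:ℝ) + (c:ℝ) := by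
    push_cast; ring
  have f2 : ((b + c : ℕ) : ℝ) + ((a : ℕ) : ℝ) = (a:ℝ) + (b:ℝ) + (c:ℝ) := by
    push_cast; ring
  have f3 : ((c + a : ℕ) : ℝ) + ((b : ℕ) : ℝ) = (a:ℝ) + (b:ℝ) + (c:ℝ) := by
    push_cast; ring
  rw [e1, e2, e3, f1, f2, f3]
  rw [← add_div, ← add_div, ← add_div, ← add_div]
  have hD1 : (((a:ℝ) + (b:ℝ) + (c:ℝ) + 2) * ((a:ℝ) + (b:ℝ) + (c:ℝ) + 2 + 2) *
      ((a:ℝ) + (b:ℝ) + (c:ℝ) + 2 + 4)) ≠ 0 := by positivity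
  have hD2 : (((a:ℝ) + (b:ℝ) + (c:ℝ)) * ((a:ℝ) + (b:ℝ) + (c:ℝ) + 2) *
      ((a:ℝ) + (b:ℝ) + (c:ℝ) + 4)) ≠ 0 := by
    have : (0:ℝ) < (a:ℝ) + (b:ℝ) + (c:ℝ) := by linarith
    positivity
  rw [div_eq_div_iff hD1 hD2]
  push_cast
  ring

theorem typeI_weight_uniqueness (F : ℕ × ℕ → ℝ)
    (hanti : ∀ n k : ℕ, 1 ≤ n + k → F (n, k) = - F (k, n))
    (htriple : ∀ a b c : ℕ, 1 ≤ a + b + c →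
      F (a + b + 2, c) + F (b + c + 2, a) + F (c + a + 2, b) =
        F (a + b, c) + F (b + c, a) + F (c + a, b))
    (h10 : F (1, 0) = 4 / 15) (h20 : F (2, 0) = 1 / 6) (h30 : F (3, 0) = 4 / 35) :
    ∀ n k : ℕ, 1 ≤ n + k →
      F (n, k) = 4 * ((n : ℝ) - (k : ℝ)) /
        (((n : ℝ) + (k : ℝ)) * ((n : ℝ) + (k : ℝ) + 2) * ((n : ℝ) + (k : ℝ) + 4)) := by
  have antiG : ∀ p q : ℕ, 1 ≤ p + q → F (p, q) - Tw (p, q) = -(F (q, p) - Tw (q, p)) := by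
    intro p q h
    rw [hanti p q h, Tw_anti p q]; ring
  have main : ∀ s : ℕ, ∀ n k : ℕ, n + k = s → 1 ≤ s → F (n, k) = Tw (n, k) := by
    intro s
    induction s using Nat.strong_induction_on with
    | _ s IH =>
    intro n k hnk hs
    rcases lt_or_ge s 4 with hs4 | hs4
    · -- small cases s = 1, 2, 3
      interval_cases s
      · -- s = 1
        have hcase : (n = 1 ∧ k = 0) ∨ (n = 0 ∧ k = 1) := by omega
        rcases hcase with ⟨rfl, rfl⟩ | ⟨rfl, rfl⟩
        · rw [h10]; simp [Tw]; norm_num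
        · rw [hanti 0 1 (by omega), h10]; simp [Tw]; norm_num
      · -- s = 2
        have hcase : (n = 2 ∧ k = 0) ∨ (n = 1 ∧ k = 1) ∨ (n = 0 ∧ k = 2) := by omega
        rcases hcase with ⟨rfl, rfl⟩ | ⟨rfl, rfl⟩ | ⟨rfl, rfl⟩
        · rw [h20]; simp [Tw]; norm_num
        · have h11 := hanti 1 1 (by omega)
          have : F (1, 1) = 0 := by linarith
          rw [this]; simp [Tw]
        · rw [hanti 0 2 (by omega), h20]; simp [Tw]; norm_num
      · -- s = 3
        have e := htriple 1 0 0 (by omega)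
        norm_num at e
        -- e : F (3, 0) + F (2, 1) + F (3, 0) = F (1, 0) + F (0, 1) + F (1, 0)
        have h01 : F (0, 1) = - F (1, 0) := hanti 0 1 (by omega)
        have h21 : F (2, 1) = 4 / 105 := by
          rw [h30, h01, h10] at e; linarith
        have hcase : (n = 3 ∧ k = 0) ∨ (n = 2 ∧ k = 1) ∨ (n = 1 ∧ k = 2) ∨
            (n = 0 ∧ k = 3) := by omega
        rcases hcase with ⟨rfl, rfl⟩ | ⟨rfl, rfl⟩ | ⟨rfl, rfl⟩ | ⟨rfl, rfl⟩
        · rw [h30]; simp [Tw]; norm_num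
        · rw [h21]; simp [Tw]; norm_num
        · rw [hanti 1 2 (by omega), h21]; simp [Tw]; norm_num
        · rw [hanti 0 3 (by omega), h30]; simp [Tw]; norm_num
    · -- big case: s = m + 2 with m ≥ 2
      obtain ⟨m, rfl⟩ : ∃ m, s = m + 2 := ⟨s - 2, by omega⟩
      have hm : 2 ≤ m := by omega
      have key : ∀ a b c : ℕ, a + b + c = m →
          F (a + b + 2, c) + F (b + c + 2, a) + F (c + a + 2, b) =
            Tw (a + b + 2, c) + Tw (b + c + 2, a) + Tw (c + a + 2, b) := by
        intro a b c habc
        have ht := htriple a b c (by omega)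
        have tt := Tw_triple a b c (by omega)
        have r1 : F (a + b, c) = Tw (a + b, c) := IH m (by omega) (a + b) c (by omega) (by omega)
        have r2 : F (b + c, a) = Tw (b + c, a) := IH m (by omega) (b + c) a (by omega) (by omega)
        have r3 : F (c + a, b) = Tw (c + a, b) := IH m (by omega) (c + a) b (by omega) (by omega)
        rw [r1, r2, r3] at ht
        linarith
      have AP : ∀ j t : ℕ, j + t = m →
          F (t + 2, j) - Tw (t + 2, j) =
            (F (m + 2, 0) - Tw (m + 2, 0)) +
              (j : ℝ) * ((F (m + 1, 1) - Tw (m + 1, 1)) - (F (m + 2, 0) - Tw (m + 2, 0))) := by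
        intro j
        induction j with
        | zero =>
          intro t ht
          have : t = m := by omega
          subst this
          push_cast
          ring
        | succ j ih =>
          intro t ht
          have e1 := key (j + 1) t 0 (by omega)
          have e2 := key j t 1 (by omega)
          have e3 := ih (t + 1) (by omega)
          rw [show j + 1 + t + 2 = m + 2 by omega, show t + 0 + 2 = t + 2 by omega,
            show 0 + (j + 1) + 2 = j + 3 by omega] at e1
          rw [show j + t + 2 = m + 1 by omega, show t + 1 + 2 = t + 3 by omega,
            show 1 + j + 2 = j + 3 by omega] at e2
          rw [show t + 1 + 2 = t + 3 by omega] at e3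
          push_cast at e3 ⊢
          linarith
      have e4 := key m 0 0 (by omega)
      rw [show m + 0 + 2 = m + 2 by omega, show 0 + 0 + 2 = 2 by omega,
        show 0 + m + 2 = m + 2 by omega] at e4
      have e5 := AP m 0 (by omega)
      -- e5 : F (0+2, m) - Tw (0+2, m) = ...
      rw [show (0:ℕ) + 2 = 2 by omega] at e5
      obtain ⟨u, hu⟩ : ∃ u, m = u + 2 := ⟨m - 2, by omega⟩
      have e6 := AP 2 u (by omega)
      rw [show u + 2 = m by omega] at e6
      have e7 := antiG 2 m (by omega)
      set A := F (m + 2, 0) - Tw (m + 2, 0) with hA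
      set B := F (m + 1, 1) - Tw (m + 1, 1) with hB
      push_cast at e6
      -- e5 : F (2, m) - Tw (2, m) = A + ↑m * (B - A)
      -- e6 : F (m, 2) - Tw (m, 2) = A + 2 * (B - A)
      -- e7 : F (2, m) - Tw (2, m) = -(F (m, 2) - Tw (m, 2))
      -- e4 : 2 F(m+2,0) + F(2,m) = 2 Tw(m+2,0) + Tw(2,m)
      have h1 : 3 * A + (m : ℝ) * (B - A) = 0 := by
        have := hA
        linarith [e4, e5]
      have h2 : 2 * A + (m : ℝ) * (B - A) + 2 * (B - A) = 0 := by
        linarith [e5, e6, e7]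
      have h3 : A = 2 * (B - A) := by linarith
      have h4 : ((m : ℝ) + 6) * (B - A) = 0 := by linear_combination h1 - 3 * h3
      have hm6 : (0:ℝ) < (m : ℝ) + 6 := by positivity
      have h5 : B - A = 0 := by
        rcases mul_eq_zero.mp h4 with h | h
        · linarith
        · exact h
      have h6 : A = 0 := by linarith
      -- conclude
      have hk : k ≤ m ∨ k = m + 1 ∨ k = m + 2 := by omega
      rcases hk with hk | hk | hk
      · obtain ⟨t, ht, hn⟩ : ∃ t, k + t = m ∧ n = t + 2 := ⟨m - k, by omega, by omega⟩
        subst hn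
        have := AP k t ht
        rw [h5] at this
        simp at this
        linarith
      · have hn : n = 1 := by omega
        subst hn; subst hk
        have := antiG (m + 1) 1 (by omega)
        have hB0 : B = 0 := by linarith
        rw [hB] at hB0
        linarith [this, hB0]
      · have hn : n = 0 := by omega
        subst hn; subst hk
        have := antiG (m + 2) 0 (by omega)
        rw [hA] at h6
        linarith [this, h6]
  intro n k h
  have := main (n + k) n k rfl h
  rw [this]
  simp [Tw]
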